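/- arXiv:2010.02581 — 5 statements merged into one kernel-verified Lean document; each statement's English description precedes it below -/
import Mathlib

section
/- Let X be a topological space and B : X → SL(2,ℂ) a continuous map. Suppose λ : X → ℂ is continuous and for every ζ ∈ X, e^{λ(ζ)} is an eigenvalue of B(ζ) and e^{λ(ζ)} ≠ e^{-λ(ζ)}. Then there exists a continuous map F : X → sl(2,ℂ) (trace-zero 2×2 complex matrices) such that B(ζ) = exp(F(ζ)) for all ζ, and λ(ζ) is an eigenvalue of F(ζ) for all ζ. -/
open Matrix

attribute [local instance] Matrix.linftyOpNormedRing Matrix.linftyOpNormedAlgebra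

lemma exp_of_sq (M : Matrix (Fin 2) (Fin 2) ℂ) (μ : ℂ) (hμ : μ ≠ 0)
    (h : M * M = (μ * μ) • 1) :
    NormedSpace.exp M = Complex.cosh μ • 1 + (Complex.sinh μ / μ) • M := by
  rw [NormedSpace.exp_eq_tsum (𝕂 := ℂ)]
  refine HasSum.tsum_eq ?_
  have hM : ∀ k : ℕ, M ^ (2 * k) = (μ ^ (2 * k)) • 1 := by
    intro k
    rw [pow_mul, sq, h, smul_pow, one_pow, pow_mul, sq, mul_pow]
  refine HasSum.even_add_odd ?_ ?_
  · have h1 := (Complex.hasSum_cosh μ).smul_const (1 : Matrix (Fin 2) (Fin 2) ℂ)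
    convert h1 using 2 with k
    case e'_3 => rfl
    rw [hM k, smul_smul, div_eq_inv_mul]
  · have h2 := ((Complex.hasSum_sinh μ).div_const μ).smul_const M
    convert h2 using 2 with k
    case e'_3 => rfl
    rw [pow_succ, hM k, smul_mul_assoc, one_mul, smul_smul]
    congr 1
    rw [pow_succ]
    rw [div_div, mul_div_mul_right _ _ hμ, div_eq_inv_mul]

lemma CH2 (M : Matrix (Fin 2) (Fin 2) ℂ) : M * M = M.trace • M - M.det • 1 := by
  ext i j
  fin_cases i <;> fin_cases j <;>
    simp [Matrix.mul_apply, Fin.sum_univ_two, Matrix.trace_fin_two, Matrix.det_fin_two,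
      Matrix.one_apply] <;> ring

lemma key (M : Matrix (Fin 2) (Fin 2) ℂ) (lam u v : ℂ) (huv : u * v = 1)
    (hne : u ≠ v) (hlam : lam ≠ 0) (hdet : M.det = 1) (htr : M.trace = u + v) :
    ((2 * lam / (u - v)) • M + (-(lam * (u + v)) / (u - v)) • 1).trace = 0 ∧
    ((2 * lam / (u - v)) • M + (-(lam * (u + v)) / (u - v)) • 1) *
      ((2 * lam / (u - v)) • M + (-(lam * (u + v)) / (u - v)) • 1) = (lam * lam) • 1 ∧
    ((u + v) / 2) • (1 : Matrix (Fin 2) (Fin 2) ℂ) +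
      ((u - v) / 2 / lam) • ((2 * lam / (u - v)) • M + (-(lam * (u + v)) / (u - v)) • 1) = M ∧
    (lam • (1 : Matrix (Fin 2) (Fin 2) ℂ) -
      ((2 * lam / (u - v)) • M + (-(lam * (u + v)) / (u - v)) • 1)).det = 0 := by
  have hd : u - v ≠ 0 := sub_ne_zero.mpr hne
  set a : ℂ := 2 * lam / (u - v) with ha_def
  set b : ℂ := -(lam * (u + v)) / (u - v) with hb_def
  have hab : a * (u + v) + 2 * b = 0 := by
    rw [ha_def, hb_def]
    field_simp
    ring
  have hba : b * b - a * a = lam * lam := by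
    rw [ha_def, hb_def]
    field_simp
    ring_nf
    linear_combination 4 * huv
  refine ⟨?_, ?_, ?_, ?_⟩
  · rw [Matrix.trace_add, Matrix.trace_smul, Matrix.trace_smul, Matrix.trace_one, htr]
    simp only [Fintype.card_fin, smul_eq_mul]
    push_cast
    linear_combination hab
  · have hch := CH2 M
    rw [htr, hdet] at hch
    have expand : (a • M + b • 1) * (a • M + b • 1)
        = (a * a) • (M * M) + (2 * (a * b)) • M + (b * b) • 1 := by
      simp only [add_mul, mul_add, smul_mul_assoc, mul_smul_comm, smul_smul, mul_one, one_mul]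
      module
    rw [expand, hch, smul_sub, smul_smul, smul_smul]
    have c1 : a * a * (u + v) + 2 * (a * b) = 0 := by linear_combination a * hab
    match_scalars
    · linear_combination c1
    · linear_combination hba
  · have hsa : (u - v) / 2 / lam * a = 1 := by
      rw [ha_def]
      field_simp
    have hcb : (u + v) / 2 + (u - v) / 2 / lam * b = 0 := by
      rw [hb_def]
      field_simp
      ring
    rw [smul_add, smul_smul, smul_smul, hsa, one_smul, ← add_assoc, add_comm _ M, add_assoc,
      ← add_smul, hcb, zero_smul, add_zero]
  · rw [Matrix.det_fin_two]
    rw [Matrix.det_fin_two] at hdet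
    rw [Matrix.trace_fin_two] at htr
    simp only [Matrix.sub_apply, Matrix.smul_apply, Matrix.add_apply, Matrix.one_apply,
      smul_eq_mul, mul_one, mul_zero]
    norm_num
    rw [ha_def, hb_def]
    field_simp
    ring_nf
    linear_combination (-4 * lam ^ 2) * huv + (4 * lam ^ 2) * hdet + (-4 * lam ^ 2 * u) * htr

theorem stmt_0 {X : Type*} [TopologicalSpace X]
    (B : X → Matrix (Fin 2) (Fin 2) ℂ) (hBc : Continuous B)
    (hBdet : ∀ ζ, (B ζ).det = 1)
    (lam : X → ℂ) (hlamc : Continuous lam)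
    (heig : ∀ ζ, (Complex.exp (lam ζ) • (1 : Matrix (Fin 2) (Fin 2) ℂ) - B ζ).det = 0)
    (hne : ∀ ζ, Complex.exp (lam ζ) ≠ Complex.exp (-lam ζ)) :
    ∃ F : X → Matrix (Fin 2) (Fin 2) ℂ, Continuous F ∧
      (∀ ζ, (F ζ).trace = 0) ∧
      (∀ ζ, NormedSpace.exp (F ζ) = B ζ) ∧
      (∀ ζ, (lam ζ • (1 : Matrix (Fin 2) (Fin 2) ℂ) - F ζ).det = 0) := by
  have hee' : ∀ ζ, Complex.exp (lam ζ) * Complex.exp (-lam ζ) = 1 := fun ζ => by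
    rw [← Complex.exp_add]; simp
  have hlam0 : ∀ ζ, lam ζ ≠ 0 := by
    intro ζ h
    exact hne ζ (by rw [h, neg_zero])
  have htr : ∀ ζ, (B ζ).trace = Complex.exp (lam ζ) + Complex.exp (-lam ζ) := by
    intro ζ
    have h1 := heig ζ
    have h2 := hBdet ζ
    rw [Matrix.det_fin_two] at h1 h2
    simp only [Matrix.sub_apply, Matrix.smul_apply, Matrix.one_apply, smul_eq_mul,
      mul_one, mul_zero, if_true] at h1
    norm_num at h1
    rw [Matrix.trace_fin_two]
    have he0 : Complex.exp (lam ζ) ≠ 0 := Complex.exp_ne_zero _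
    apply mul_left_cancel₀ he0
    linear_combination -h1 + h2 - hee' ζ
  have hkey := fun ζ => key (B ζ) (lam ζ) (Complex.exp (lam ζ)) (Complex.exp (-lam ζ))
    (hee' ζ) (hne ζ) (hlam0 ζ) (hBdet ζ) (htr ζ)
  refine ⟨fun ζ => (2 * lam ζ / (Complex.exp (lam ζ) - Complex.exp (-lam ζ))) • B ζ +
      (-(lam ζ * (Complex.exp (lam ζ) + Complex.exp (-lam ζ))) /
        (Complex.exp (lam ζ) - Complex.exp (-lam ζ))) • 1, ?_, ?_, ?_, ?_⟩
  · have hdne : ∀ ζ, Complex.exp (lam ζ) - Complex.exp (-lam ζ) ≠ 0 :=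
      fun ζ => sub_ne_zero.mpr (hne ζ)
    have hac : Continuous fun ζ =>
        2 * lam ζ / (Complex.exp (lam ζ) - Complex.exp (-lam ζ)) := by
      apply Continuous.div
      · fun_prop
      · fun_prop
      · exact hdne
    have hbc' : Continuous fun ζ =>
        -(lam ζ * (Complex.exp (lam ζ) + Complex.exp (-lam ζ))) /
          (Complex.exp (lam ζ) - Complex.exp (-lam ζ)) := by
      apply Continuous.div
      · fun_prop
      · fun_prop
      · exact hdne
    exact (hac.smul hBc).add (hbc'.smul continuous_const)
  · exact fun ζ => (hkey ζ).1
  · intro ζ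
    rw [exp_of_sq _ (lam ζ) (hlam0 ζ) (hkey ζ).2.1, Complex.cosh, Complex.sinh]
    have := (hkey ζ).2.2.1
    convert this using 3
  · exact fun ζ => (hkey ζ).2.2.2
end

section
/- Let B ∈ SL(2,ℂ), λ ∈ ℂ, and suppose e^λ is an eigenvalue of B with e^λ ≠ e^{-λ}. Then there exists a unique matrix F ∈ sl(2,ℂ) such that exp(F) = B and λ is an eigenvalue of F. -/
open Matrix
open scoped Nat

/-- Cayley–Hamilton for 2×2 matrices, by hand. -/
lemma ch2 (M : Matrix (Fin 2) (Fin 2) ℂ) :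
    M ^ 2 = M.trace • M - M.det • (1 : Matrix (Fin 2) (Fin 2) ℂ) := by
  ext i j
  rw [pow_two]
  fin_cases i <;> fin_cases j <;>
    simp [Matrix.mul_apply, Fin.sum_univ_two, Matrix.trace_fin_two, Matrix.det_fin_two,
      Matrix.one_apply] <;> ring

lemma det_smul_one_sub (a : ℂ) (M : Matrix (Fin 2) (Fin 2) ℂ) :
    (a • (1 : Matrix (Fin 2) (Fin 2) ℂ) - M).det = a ^ 2 - a * M.trace + M.det := by
  simp [Matrix.det_fin_two, Matrix.trace_fin_two, Matrix.one_apply]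
  ring

lemma hasSum_even_part (lam : ℂ) :
    HasSum (fun n : ℕ => lam ^ (2 * n) / (2 * n)!)
      ((Complex.exp lam + Complex.exp (-lam)) / 2) := by
  have h1 : HasSum (fun n : ℕ => lam ^ n / n !) (Complex.exp lam) := by
    rw [Complex.exp_eq_exp_ℂ]; exact NormedSpace.expSeries_div_hasSum_exp lam
  have h2 : HasSum (fun n : ℕ => (-lam) ^ n / n !) (Complex.exp (-lam)) := by
    rw [Complex.exp_eq_exp_ℂ]; exact NormedSpace.expSeries_div_hasSum_exp (-lam)
  have h3 := (h1.add h2).div_const 2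
  have hi : Function.Injective (fun n : ℕ => 2 * n) := fun a b h => by
    simp only [] at h; omega
  have h4 : HasSum ((fun n : ℕ => ((lam ^ n / (n ! : ℂ)) + ((-lam) ^ n / (n ! : ℂ))) / 2) ∘ fun n => 2 * n)
      ((Complex.exp lam + Complex.exp (-lam)) / 2) := by
    rw [Function.Injective.hasSum_iff hi]
    · exact h3
    · intro x hx
      have hodd : Odd x := by
        rcases Nat.even_or_odd x with he | ho
        · obtain ⟨k, hk⟩ := he
          exact absurd ⟨k, show 2 * k = x by omega⟩ hx
        · exact ho
      simp only [hodd.neg_pow]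
      ring
  convert h4 using 2 with n
  have hev : Even (2 * n) := ⟨n, by ring⟩
  simp only [Function.comp, hev.neg_pow]
  ring

lemma hasSum_odd_part (lam : ℂ) (hlam : lam ≠ 0) :
    HasSum (fun n : ℕ => lam ^ (2 * n) / (2 * n + 1)!)
      ((Complex.exp lam - Complex.exp (-lam)) / (2 * lam)) := by
  have h1 : HasSum (fun n : ℕ => lam ^ n / n !) (Complex.exp lam) := by
    rw [Complex.exp_eq_exp_ℂ]; exact NormedSpace.expSeries_div_hasSum_exp lam
  have h2 : HasSum (fun n : ℕ => (-lam) ^ n / n !) (Complex.exp (-lam)) := by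
    rw [Complex.exp_eq_exp_ℂ]; exact NormedSpace.expSeries_div_hasSum_exp (-lam)
  have h3 := (h1.sub h2).div_const (2 * lam)
  have hi : Function.Injective (fun n : ℕ => 2 * n + 1) := fun a b h => by
    simp only [] at h; omega
  have h4 : HasSum ((fun n : ℕ => ((lam ^ n / (n ! : ℂ)) - ((-lam) ^ n / (n ! : ℂ))) / (2 * lam)) ∘
        fun n => 2 * n + 1)
      ((Complex.exp lam - Complex.exp (-lam)) / (2 * lam)) := by
    rw [Function.Injective.hasSum_iff hi]
    · exact h3
    · intro x hx
      have heven : Even x := by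
        rcases Nat.even_or_odd x with he | ho
        · exact he
        · obtain ⟨k, hk⟩ := ho
          exact absurd ⟨k, show 2 * k + 1 = x by omega⟩ hx
      simp only [heven.neg_pow]
      ring
  convert h4 using 2 with n
  have hodd : Odd (2 * n + 1) := ⟨n, by ring⟩
  simp only [Function.comp, hodd.neg_pow]
  rw [pow_succ]
  field_simp
  ring

/-- Closed form of the matrix exponential when `F ^ 2 = lam ^ 2 • 1`. -/
lemma exp_of_sq_s1 (F : Matrix (Fin 2) (Fin 2) ℂ) (lam : ℂ) (hlam : lam ≠ 0)
    (hF2 : F ^ 2 = (lam ^ 2) • (1 : Matrix (Fin 2) (Fin 2) ℂ)) :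
    NormedSpace.exp F = ((Complex.exp lam + Complex.exp (-lam)) / 2) •
        (1 : Matrix (Fin 2) (Fin 2) ℂ) +
      ((Complex.exp lam - Complex.exp (-lam)) / (2 * lam)) • F := by
  have hpow_even : ∀ n : ℕ, F ^ (2 * n) = (lam ^ (2 * n)) • (1 : Matrix (Fin 2) (Fin 2) ℂ) := by
    intro n
    rw [pow_mul, hF2, smul_pow, one_pow, ← pow_mul]
  have hpow_odd : ∀ n : ℕ, F ^ (2 * n + 1) = (lam ^ (2 * n)) • F := by
    intro n
    rw [pow_succ, hpow_even n, smul_mul_assoc, one_mul]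
  rw [NormedSpace.exp_eq_tsum ℂ]
  refine HasSum.tsum_eq ?_
  refine HasSum.even_add_odd ?_ ?_
  · have := (hasSum_even_part lam).smul_const (1 : Matrix (Fin 2) (Fin 2) ℂ)
    convert this using 2 with n
    · rfl
    rw [hpow_even n, smul_smul, div_eq_mul_inv, mul_comm]
  · have := ((hasSum_odd_part lam hlam)).smul_const F
    convert this using 2 with n
    · rfl
    rw [hpow_odd n, smul_smul, div_eq_mul_inv, mul_comm]

theorem stmt_1 (B : Matrix (Fin 2) (Fin 2) ℂ) (hBdet : B.det = 1) (lam : ℂ)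
    (heig : (Complex.exp lam • (1 : Matrix (Fin 2) (Fin 2) ℂ) - B).det = 0)
    (hne : Complex.exp lam ≠ Complex.exp (-lam)) :
    ∃! F : Matrix (Fin 2) (Fin 2) ℂ,
      F.trace = 0 ∧ NormedSpace.exp F = B ∧
      (lam • (1 : Matrix (Fin 2) (Fin 2) ℂ) - F).det = 0 := by
  set a := Complex.exp lam with ha
  set b := Complex.exp (-lam) with hb
  have hab : a * b = 1 := by
    rw [ha, hb, ← Complex.exp_add, add_neg_cancel, Complex.exp_zero]
  have ha0 : a ≠ 0 := Complex.exp_ne_zero _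
  have hab0 : a - b ≠ 0 := sub_ne_zero.mpr hne
  have hlam : lam ≠ 0 := by
    rintro rfl
    exact hne (by rw [ha, hb, neg_zero])
  set c := (a + b) / 2 with hc
  set s := (a - b) / 2 with hs
  have hs0 : s ≠ 0 := by
    rw [hs]
    exact div_ne_zero hab0 two_ne_zero
  -- trace of B
  have htr : B.trace = a + b := by
    have h0 := det_smul_one_sub a B
    rw [heig, hBdet] at h0
    have h3 : a * B.trace = a * (a + b) := by linear_combination h0 - hab
    exact mul_left_cancel₀ ha0 h3
  set F := (lam / s) • (B - c • (1 : Matrix (Fin 2) (Fin 2) ℂ)) with hF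
  have htrF : F.trace = 0 := by
    rw [hF, Matrix.trace_smul, Matrix.trace_sub, Matrix.trace_smul, htr, Matrix.trace_one, hc]
    simp only [smul_eq_mul, Fintype.card_fin, Nat.cast_ofNat]
    ring
  have hdet1 : (B - c • (1 : Matrix (Fin 2) (Fin 2) ℂ)).det = 1 - c ^ 2 := by
    rw [show B - c • (1 : Matrix (Fin 2) (Fin 2) ℂ) =
      -(c • (1 : Matrix (Fin 2) (Fin 2) ℂ) - B) from (neg_sub _ _).symm, Matrix.det_neg,
      det_smul_one_sub, htr, hBdet, hc]
    simp only [Fintype.card_fin]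
    ring
  have hcs : 1 - c ^ 2 = -s ^ 2 := by
    rw [hc, hs]
    linear_combination -hab
  have hdetF : F.det = -lam ^ 2 := by
    rw [hF, Matrix.det_smul, hdet1, hcs]
    simp only [Fintype.card_fin]
    field_simp
  have hF2 : F ^ 2 = (lam ^ 2) • (1 : Matrix (Fin 2) (Fin 2) ℂ) := by
    rw [ch2 F, htrF, hdetF]
    simp
  have hexpF : NormedSpace.exp F = B := by
    rw [exp_of_sq_s1 F lam hlam hF2, hF, smul_smul]
    have hone : (a - b) / (2 * lam) * (lam / s) = 1 := by
      rw [hs]; field_simp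
    rw [hone, one_smul]
    abel
  have hdetlamF : (lam • (1 : Matrix (Fin 2) (Fin 2) ℂ) - F).det = 0 := by
    rw [det_smul_one_sub, htrF, hdetF]
    ring
  refine ⟨F, ⟨htrF, hexpF, hdetlamF⟩, ?_⟩
  rintro G ⟨htrG, hexpG, hdetlamG⟩
  have hdetG : G.det = -lam ^ 2 := by
    have h0 := det_smul_one_sub lam G
    rw [hdetlamG, htrG] at h0
    linear_combination -h0
  have hG2 : G ^ 2 = (lam ^ 2) • (1 : Matrix (Fin 2) (Fin 2) ℂ) := by
    rw [ch2 G, htrG, hdetG]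
    simp
  have hexpG' := exp_of_sq_s1 G lam hlam hG2
  rw [hexpG] at hexpG'
  have hcoef : (a - b) / (2 * lam) = s / lam := by rw [hs]; ring
  rw [hcoef] at hexpG'
  have hsolve : (s / lam) • G = B - c • (1 : Matrix (Fin 2) (Fin 2) ℂ) := by
    rw [hexpG']; abel
  have hfin : G = (lam / s) • (B - c • (1 : Matrix (Fin 2) (Fin 2) ℂ)) := by
    rw [← hsolve, smul_smul,
      show lam / s * (s / lam) = 1 by field_simp, one_smul]
  rw [hfin, hF]
end

section
/- If B ∈ SL(2,ℂ) and λ ∈ ℂ satisfy e^λ eigenvalue of B, e^λ ≠ e^{-λ}, and P = (e^λ − e^{-λ})^{-1}(B − e^{-λ} I), then F := λP − λ(I − P) satisfies exp(F) = B, tr F = 0, and the eigenvalues of F are λ and −λ. -/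
set_option maxHeartbeats 1000000

open Matrix Nat

lemma exp_smul_idem (c : ℂ) (P : Matrix (Fin 2) (Fin 2) ℂ) (h : P * P = P) :
    NormedSpace.exp (c • P) = 1 + (Complex.exp c - 1) • P := by
  letI : NormedRing (Matrix (Fin 2) (Fin 2) ℂ) := Matrix.linftyOpNormedRing
  letI : NormedAlgebra ℂ (Matrix (Fin 2) (Fin 2) ℂ) := Matrix.linftyOpNormedAlgebra
  have hpow : ∀ n : ℕ, P ^ (n + 1) = P := by
    intro n; induction n with
    | zero => simp
    | succ n ih => rw [pow_succ, ih, h]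
  have hs : Summable (fun n : ℕ => ((n ! : ℂ)⁻¹) • (c • P) ^ n) :=
    NormedSpace.expSeries_summable' (c • P)
  have hsc : Summable (fun n : ℕ => ((n ! : ℂ)⁻¹) * c ^ n) := by
    simpa [smul_eq_mul] using NormedSpace.expSeries_summable' (𝕂 := ℂ) (𝔸 := ℂ) c
  have hsc1 : Summable (fun n : ℕ => (((n+1) ! : ℂ)⁻¹) * c ^ (n+1)) :=
    (summable_nat_add_iff 1).mpr hsc
  have hexpc : Complex.exp c = 1 + ∑' n : ℕ, (((n+1) ! : ℂ)⁻¹) * c ^ (n+1) := by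
    have := Summable.tsum_eq_zero_add hsc
    rw [Complex.exp_eq_exp_ℂ, NormedSpace.exp_eq_tsum ℂ]
    simpa [smul_eq_mul] using this
  rw [NormedSpace.exp_eq_tsum ℂ]
  beta_reduce
  rw [Summable.tsum_eq_zero_add hs]
  have : (fun n : ℕ => (((n+1) ! : ℂ)⁻¹) • (c • P) ^ (n+1))
      = fun n : ℕ => ((((n+1) ! : ℂ)⁻¹) * c ^ (n+1)) • P := by
    funext n
    rw [smul_pow, hpow, smul_smul]
  rw [this, Summable.tsum_smul_const hsc1, hexpc]
  simp [add_smul]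

theorem stmt_3 (B : Matrix (Fin 2) (Fin 2) ℂ) (hBdet : B.det = 1) (lam : ℂ)
    (heig : (Complex.exp lam • (1 : Matrix (Fin 2) (Fin 2) ℂ) - B).det = 0)
    (hne : Complex.exp lam ≠ Complex.exp (-lam))
    (P F : Matrix (Fin 2) (Fin 2) ℂ)
    (hP : P = (Complex.exp lam - Complex.exp (-lam))⁻¹ •
        (B - Complex.exp (-lam) • (1 : Matrix (Fin 2) (Fin 2) ℂ)))
    (hF : F = lam • P - lam • ((1 : Matrix (Fin 2) (Fin 2) ℂ) - P)) :
    NormedSpace.exp F = B ∧ F.trace = 0 ∧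
    (lam • (1 : Matrix (Fin 2) (Fin 2) ℂ) - F).det = 0 ∧
    ((-lam) • (1 : Matrix (Fin 2) (Fin 2) ℂ) - F).det = 0 := by
  set e := Complex.exp lam with he
  set f := Complex.exp (-lam) with hf
  have hef : e * f = 1 := by
    rw [he, hf, ← Complex.exp_add, add_neg_cancel, Complex.exp_zero]
  have he0 : e ≠ 0 := Complex.exp_ne_zero lam
  have hd : e - f ≠ 0 := sub_ne_zero.mpr hne
  have hBdet' : B 0 0 * B 1 1 - B 0 1 * B 1 0 = 1 := by
    rw [← Matrix.det_fin_two]; exact hBdet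
  have heig' : (e - B 0 0) * (e - B 1 1) - B 0 1 * B 1 0 = 0 := by
    have := heig
    rw [Matrix.det_fin_two] at this
    simpa [Matrix.one_apply] using this
  -- trace of B
  have ht : B 0 0 + B 1 1 = e + f := by
    have h1 : e * (B 0 0 + B 1 1) = e * (e + f) := by
      linear_combination hBdet' - heig' - hef
    exact mul_left_cancel₀ he0 h1
  -- Cayley-Hamilton
  have hCH : B * B = (e + f) • B - (1 : Matrix (Fin 2) (Fin 2) ℂ) := by
    ext i j
    fin_cases i <;> fin_cases j <;>
      simp [Matrix.mul_apply, Fin.sum_univ_two, Matrix.one_apply]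
    · linear_combination B 0 0 * ht - hBdet'
    · linear_combination B 0 1 * ht
    · linear_combination B 1 0 * ht
    · linear_combination B 1 1 * ht - hBdet'
  have hdP : (e - f) • P = B - f • (1 : Matrix (Fin 2) (Fin 2) ℂ) := by
    rw [hP, smul_smul, mul_inv_cancel₀ hd, one_smul]
  -- P is idempotent
  have hPP : P * P = P := by
    have key : ((e - f) • P) * ((e - f) • P) = (e - f) • ((e - f) • P) := by
      rw [hdP]
      have expand : (B - f • (1 : Matrix (Fin 2) (Fin 2) ℂ)) * (B - f • 1)
          = B * B - f • B - f • B + (f * f) • 1 := by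
        simp only [sub_mul, mul_sub, smul_mul_assoc, mul_smul_comm, one_mul, mul_one, smul_smul, smul_sub]
        abel
      rw [expand, hCH]
      match_scalars <;> first
        | ring1
        | linear_combination hef
    have key2 : (e - f) • ((e - f) • (P * P)) = (e - f) • ((e - f) • P) := by
      rw [← key, smul_mul_assoc, mul_smul_comm]
    exact smul_right_injective _ hd (smul_right_injective _ hd key2)
  have hF2 : F = (2 * lam) • P - lam • (1 : Matrix (Fin 2) (Fin 2) ℂ) := by
    rw [hF]; module
  -- trace of P
  have htrP : P.trace = 1 := by
    have h1 : (e - f) * P.trace = B.trace - f * 2 := by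
      simpa [Matrix.trace_smul, Matrix.trace_sub, Matrix.trace_one, smul_eq_mul,
        Fintype.card_fin] using congrArg Matrix.trace hdP
    have hBtr : B.trace = e + f := by rw [Matrix.trace_fin_two]; exact ht
    refine mul_left_cancel₀ hd ?_
    rw [h1, hBtr]; ring
  have htr : P 0 0 + P 1 1 = 1 := by
    rw [← Matrix.trace_fin_two]; exact htrP
  have h00 : P 0 0 * P 0 0 + P 0 1 * P 1 0 = P 0 0 := by
    have := congrFun (congrFun hPP 0) 0
    simpa [Matrix.mul_apply, Fin.sum_univ_two] using this
  have hdetP : P 0 0 * P 1 1 - P 0 1 * P 1 0 = 0 := by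
    linear_combination P 0 0 * htr - h00
  refine ⟨?_, ?_, ?_, ?_⟩
  · -- exp F = B
    have hFsum : F = (-lam) • (1 : Matrix (Fin 2) (Fin 2) ℂ) + (2 * lam) • P := by
      rw [hF2]; module
    have hcomm : Commute ((-lam) • (1 : Matrix (Fin 2) (Fin 2) ℂ)) ((2 * lam) • P) :=
      ((Commute.one_left P).smul_left _).smul_right _
    rw [hFsum, Matrix.exp_add_of_commute _ _ hcomm,
      exp_smul_idem (-lam) 1 (one_mul 1), exp_smul_idem (2 * lam) P hPP]
    have h1 : (1 : Matrix (Fin 2) (Fin 2) ℂ) + (Complex.exp (-lam) - 1) • 1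
        = f • (1 : Matrix (Fin 2) (Fin 2) ℂ) := by
      rw [← hf]; module
    have h2 : Complex.exp (2 * lam) = e * e := by
      rw [two_mul, Complex.exp_add, ← he]
    rw [h1, h2]
    rw [mul_add, mul_one, smul_mul_assoc, one_mul, smul_smul]
    have h3 : f * (e * e - 1) = e - f := by linear_combination e * hef
    rw [h3, hdP]
    abel
  · rw [hF2, Matrix.trace_sub, Matrix.trace_smul, Matrix.trace_smul, Matrix.trace_one, htrP]
    simp [Fintype.card_fin, smul_eq_mul]
    ring
  · have h4 : lam • (1 : Matrix (Fin 2) (Fin 2) ℂ) - F = (2 * lam) • (1 - P) := by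
      rw [hF2]; module
    rw [h4, Matrix.det_smul, Matrix.det_fin_two]
    simp [Matrix.one_apply]
    right
    linear_combination hdetP - htr
  · have h5 : (-lam) • (1 : Matrix (Fin 2) (Fin 2) ℂ) - F = (-(2 * lam)) • P := by
      rw [hF2]; module
    rw [h5, Matrix.det_smul, Matrix.det_fin_two]
    simp
    right
    linear_combination hdetP
end

section
/- Let f : 𝔻̄ → ℂ be continuous on the closed unit disk, holomorphic on the open unit disk, and vanish identically on an open arc of the unit circle. Then f vanishes identically on 𝔻̄. -/
open Metric

lemma prod_zero_factor {ι : Type*} [DecidableEq ι] (s : Finset ι) (F : ι → ℂ → ℂ)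
    (ha : ∀ c ∈ s, AnalyticOnNhd ℂ (F c) (ball (0 : ℂ) 1))
    (h : ∀ z ∈ ball (0 : ℂ) 1, ∏ c ∈ s, F c z = 0) :
    ∃ c ∈ s, ∀ z ∈ ball (0 : ℂ) 1, F c z = 0 := by
  classical
  induction s using Finset.induction with
  | empty =>
    exfalso
    have h0 := h 0 (by simp)
    simp at h0
  | insert a t hnot ih =>
    by_cases hA : ∀ z ∈ ball (0 : ℂ) 1, F a z = 0
    · exact ⟨a, Finset.mem_insert_self a t, hA⟩
    · push_neg at hA
      obtain ⟨z₀, hz₀, hne⟩ := hA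
      have haA : AnalyticOnNhd ℂ (F a) (ball (0 : ℂ) 1) :=
        ha a (Finset.mem_insert_self a t)
      have htA : ∀ c ∈ t, AnalyticOnNhd ℂ (F c) (ball (0 : ℂ) 1) :=
        fun c hc => ha c (Finset.mem_insert_of_mem hc)
      have hPA : AnalyticOnNhd ℂ (fun z => ∏ c ∈ t, F c z) (ball (0 : ℂ) 1) :=
        Finset.analyticOnNhd_fun_prod t htA
      have hcont : ContinuousAt (F a) z₀ := (haA z₀ hz₀).continuousAt
      have hnb : ∀ᶠ z in nhds z₀, F a z ≠ 0 := hcont.eventually_ne hne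
      have hball : ∀ᶠ z in nhds z₀, z ∈ ball (0 : ℂ) 1 :=
        (isOpen_ball.eventually_mem hz₀)
      have hev : (fun z => ∏ c ∈ t, F c z) =ᶠ[nhds z₀] 0 := by
        filter_upwards [hnb, hball] with z h1 h2
        have := h z h2
        rw [Finset.prod_insert hnot] at this
        simpa using (mul_eq_zero.mp this).resolve_left h1
      have hEq : Set.EqOn (fun z => ∏ c ∈ t, F c z) 0 (ball (0 : ℂ) 1) :=
        hPA.eqOn_zero_of_preconnected_of_eventuallyEq_zero
          (convex_ball (0 : ℂ) 1).isPreconnected hz₀ hev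
      obtain ⟨c, hct, hc0⟩ := ih htA (fun z hz => hEq hz)
      exact ⟨c, Finset.mem_insert_of_mem hct, hc0⟩

theorem stmt_8 (f : ℂ → ℂ)
    (hc : ContinuousOn f (closedBall (0 : ℂ) 1))
    (hd : DifferentiableOn ℂ f (ball (0 : ℂ) 1))
    (U : Set ℂ) (hU : IsOpen U)
    (hne : (U ∩ sphere (0 : ℂ) 1).Nonempty)
    (hz : ∀ z ∈ U ∩ sphere (0 : ℂ) 1, f z = 0) :
    ∀ z ∈ closedBall (0 : ℂ) 1, f z = 0 := by
  classical
  obtain ⟨u, huU, hus⟩ := hne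
  have hu1 : ‖u‖ = 1 := by simpa using mem_sphere_zero_iff_norm.mp hus
  set V : sphere (0 : ℂ) 1 → Set ℂ := fun c => (fun z => (c : ℂ) * z) ⁻¹' U with hV
  have hVopen : ∀ c, IsOpen (V c) := fun c => hU.preimage (continuous_const.mul continuous_id)
  have hcover : sphere (0 : ℂ) 1 ⊆ ⋃ c, V c := by
    intro w hw
    have hw1 : ‖w‖ = 1 := by simpa using mem_sphere_zero_iff_norm.mp hw
    have hwne : w ≠ 0 := by intro h; simp [h] at hw1
    have hmem : u * w⁻¹ ∈ sphere (0 : ℂ) 1 := by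
      simp [mem_sphere_zero_iff_norm, norm_mul, hu1, norm_inv, hw1]
    refine Set.mem_iUnion.mpr ⟨⟨u * w⁻¹, hmem⟩, ?_⟩
    show u * w⁻¹ * w ∈ U
    rwa [inv_mul_cancel_right₀ hwne]
  obtain ⟨t, ht⟩ := (isCompact_sphere (0 : ℂ) 1).elim_finite_subcover V hVopen hcover
  set F : sphere (0 : ℂ) 1 → ℂ → ℂ := fun c z => f ((c : ℂ) * z) with hF
  have habs : ∀ c : sphere (0 : ℂ) 1, ‖(c : ℂ)‖ = 1 := fun c => by
    have := mem_sphere_zero_iff_norm.mp c.2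
    simpa using this
  have hballmaps : ∀ c : sphere (0 : ℂ) 1, Set.MapsTo (fun z => (c : ℂ) * z)
      (ball (0 : ℂ) 1) (ball (0 : ℂ) 1) := by
    intro c z hzr
    simp only [mem_ball_zero_iff, norm_mul, habs c, one_mul] at *
    exact hzr
  have hcbmaps : ∀ c : sphere (0 : ℂ) 1, Set.MapsTo (fun z => (c : ℂ) * z)
      (closedBall (0 : ℂ) 1) (closedBall (0 : ℂ) 1) := by
    intro c z hzr
    simp only [mem_closedBall_zero_iff, norm_mul, habs c, one_mul] at *
    exact hzr
  have hFc : ∀ c : sphere (0 : ℂ) 1, ContinuousOn (F c) (closedBall (0 : ℂ) 1) := by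
    intro c
    exact hc.comp ((continuous_const.mul continuous_id).continuousOn) (hcbmaps c)
  have hFd : ∀ c : sphere (0 : ℂ) 1, DifferentiableOn ℂ (F c) (ball (0 : ℂ) 1) := by
    intro c
    exact hd.comp ((differentiable_id.const_mul _).differentiableOn) (hballmaps c)
  set g : ℂ → ℂ := fun z => ∏ c ∈ t, F c z with hg
  have hgc : ContinuousOn g (closedBall (0 : ℂ) 1) :=
    continuousOn_finset_prod t fun c _ => hFc c
  have hgd : DifferentiableOn ℂ g (ball (0 : ℂ) 1) :=
    DifferentiableOn.fun_finsetProd fun c _ => hFd c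
  have hg0 : ∀ w ∈ sphere (0 : ℂ) 1, g w = 0 := by
    intro w hw
    obtain ⟨c, hct, hcw⟩ := Set.mem_iUnion₂.mp (ht hw)
    have hsph : (c : ℂ) * w ∈ sphere (0 : ℂ) 1 := by
      have hw1 := mem_sphere_zero_iff_norm.mp hw
      have hc1 := mem_sphere_zero_iff_norm.mp c.2
      simp [mem_sphere_zero_iff_norm, norm_mul, hw1, hc1]
    have : F c w = 0 := hz _ ⟨hcw, hsph⟩
    exact Finset.prod_eq_zero hct this
  have hgz : ∀ w ∈ closedBall (0 : ℂ) 1, g w = 0 := by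
    intro w hw
    have hb : Bornology.IsBounded (ball (0 : ℂ) 1) := isBounded_ball
    have hdc : DiffContOnCl ℂ g (ball (0 : ℂ) 1) :=
      ⟨hgd, by rwa [closure_ball (0 : ℂ) one_ne_zero]⟩
    have hfr : ∀ z ∈ frontier (ball (0 : ℂ) 1), ‖g z‖ ≤ 0 := by
      intro z hzf
      rw [frontier_ball (0 : ℂ) one_ne_zero] at hzf
      simp [hg0 z hzf]
    have hcl : w ∈ closure (ball (0 : ℂ) 1) := by
      rwa [closure_ball (0 : ℂ) one_ne_zero]
    have := Complex.norm_le_of_forall_mem_frontier_norm_le hb hdc hfr hcl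
    simpa using le_antisymm this (norm_nonneg _)
  have hFa : ∀ c : sphere (0 : ℂ) 1, AnalyticOnNhd ℂ (F c) (ball (0 : ℂ) 1) :=
    fun c => (hFd c).analyticOnNhd isOpen_ball
  obtain ⟨c, hct, hc0⟩ := prod_zero_factor t F (fun c _ => hFa c)
    (fun z hzb => hgz z (ball_subset_closedBall hzb))
  have hf0 : ∀ w ∈ ball (0 : ℂ) 1, f w = 0 := by
    intro w hw
    have hcne : (c : ℂ) ≠ 0 := by
      intro h
      have := habs c
      simp [h] at this
    have hmem : (c : ℂ)⁻¹ * w ∈ ball (0 : ℂ) 1 := by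
      simp only [mem_ball_zero_iff, norm_mul, norm_inv, habs c] at *
      simpa using hw
    have := hc0 _ hmem
    simpa [hF, mul_inv_cancel_left₀ hcne] using this
  intro w hw
  rcases eq_or_lt_of_le (mem_closedBall_zero_iff.mp hw) with heq | hlt
  · have hclw : w ∈ closure (ball (0 : ℂ) 1) := by
      rw [closure_ball (0 : ℂ) one_ne_zero]; exact hw
    have hne' : (nhdsWithin w (ball (0 : ℂ) 1)).NeBot :=
      mem_closure_iff_nhdsWithin_neBot.mp hclw
    have h1 : Filter.Tendsto f (nhdsWithin w (ball (0 : ℂ) 1)) (nhds (f w)) :=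
      (hc w hw).tendsto.mono_left (nhdsWithin_mono w ball_subset_closedBall)
    have h2 : Filter.Tendsto f (nhdsWithin w (ball (0 : ℂ) 1)) (nhds 0) := by
      apply Filter.Tendsto.congr' _ tendsto_const_nhds
      filter_upwards [self_mem_nhdsWithin] with z hzb
      exact (hf0 z hzb).symm
    exact tendsto_nhds_unique h1 h2
  · exact hf0 w (mem_ball_zero_iff.mpr hlt)
end

section
/- Let a be continuous on the closed unit disk 𝔻̄, holomorphic on the open unit disk, and not identically zero. Then the set {ζ ∈ ∂𝔻 : a(ζ) = 0} is nowhere dense in the unit circle ∂𝔻. -/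
open Metric Filter Topology

theorem stmt_9 (a : ℂ → ℂ)
    (hc : ContinuousOn a (closedBall (0 : ℂ) 1))
    (hd : DifferentiableOn ℂ a (ball (0 : ℂ) 1))
    (hnz : ¬ ∀ z ∈ closedBall (0 : ℂ) 1, a z = 0) :
    IsNowhereDense {z : sphere (0 : ℂ) 1 | a z = 0} := by
  have hres : Continuous fun z : sphere (0:ℂ) 1 => a z := by
    have := (hc.mono sphere_subset_closedBall)
    rw [continuousOn_iff_continuous_restrict] at this
    exact this
  have hSclosed : IsClosed {z : sphere (0:ℂ) 1 | a z = 0} :=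
    isClosed_eq hres continuous_const
  rw [hSclosed.isNowhereDense_iff]
  by_contra h
  obtain ⟨x, hx⟩ := Set.nonempty_iff_ne_empty.2 h
  obtain ⟨ε, hε, hball⟩ := Metric.mem_nhds_iff.mp (mem_interior_iff_mem_nhds.mp hx)
  set z₀ : ℂ := (x : ℂ) with hz₀def
  have hz₀ : ‖z₀‖ = 1 := mem_sphere_zero_iff_norm.mp x.2
  -- `a` vanishes on an arc around `z₀`
  have hzero : ∀ z ∈ sphere (0:ℂ) 1, dist z z₀ < ε → a z = 0 := by
    intro z hz hdz
    exact hball (show (⟨z, hz⟩ : sphere (0:ℂ) 1) ∈ ball x ε by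
      rw [Metric.mem_ball, Subtype.dist_eq]; exact hdz)
  -- finite subcover of the circle by ε-balls centered on the circle
  have hcov : sphere (0:ℂ) 1 ⊆ ⋃ w : sphere (0:ℂ) 1, ball (w:ℂ) ε := by
    intro z hz
    exact Set.mem_iUnion.2 ⟨⟨z, hz⟩, by simpa using hε⟩
  obtain ⟨T, hT⟩ := (isCompact_sphere (0:ℂ) 1).elim_finite_subcover
      (fun w : sphere (0:ℂ) 1 => ball (w:ℂ) ε) (fun w => isOpen_ball) hcov
  set c : sphere (0:ℂ) 1 → ℂ := fun w => z₀ / (w : ℂ) with hcdef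
  have hwnorm : ∀ w : sphere (0:ℂ) 1, ‖(w:ℂ)‖ = 1 := fun w =>
    mem_sphere_zero_iff_norm.mp w.2
  have hwne : ∀ w : sphere (0:ℂ) 1, (w:ℂ) ≠ 0 := fun w => by
    intro h0; have := hwnorm w; rw [h0] at this; simp at this
  have hcnorm : ∀ w : sphere (0:ℂ) 1, ‖c w‖ = 1 := fun w => by
    simp [hcdef, norm_div, hz₀, hwnorm w]
  have hcne : ∀ w : sphere (0:ℂ) 1, c w ≠ 0 := fun w => by
    intro h0; have := hcnorm w; rw [h0] at this; simp at this
  -- each rotated copy of a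
  have hmaps : ∀ w : sphere (0:ℂ) 1,
      Set.MapsTo (fun z : ℂ => c w * z) (closedBall (0:ℂ) 1) (closedBall (0:ℂ) 1) := by
    intro w z hz
    rw [mem_closedBall_zero_iff] at hz ⊢
    rw [norm_mul, hcnorm w, one_mul]; exact hz
  have hmapsb : ∀ w : sphere (0:ℂ) 1,
      Set.MapsTo (fun z : ℂ => c w * z) (ball (0:ℂ) 1) (ball (0:ℂ) 1) := by
    intro w z hz
    rw [mem_ball_zero_iff] at hz ⊢
    rw [norm_mul, hcnorm w, one_mul]; exact hz
  set f : ℂ → ℂ := fun z => ∏ w ∈ T, a (c w * z) with hfdef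
  have hfc : ContinuousOn f (closedBall (0:ℂ) 1) := by
    apply continuousOn_finset_prod
    intro w _
    exact hc.comp ((continuous_mul_left (c w)).continuousOn) (hmaps w)
  have hfd : DifferentiableOn ℂ f (ball (0:ℂ) 1) := by
    apply DifferentiableOn.fun_finsetProd
    intro w _
    exact hd.comp ((differentiable_id.const_mul (c w)).differentiableOn) (hmapsb w)
  -- f vanishes on the whole circle
  have hfsphere : ∀ z ∈ sphere (0:ℂ) 1, f z = 0 := by
    intro z hz
    obtain ⟨w, hwT, hwz⟩ := Set.mem_iUnion₂.mp (hT hz)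
    apply Finset.prod_eq_zero hwT
    have hzs : c w * z ∈ sphere (0:ℂ) 1 := by
      rw [mem_sphere_zero_iff_norm, norm_mul, hcnorm w,
        mem_sphere_zero_iff_norm.mp hz]; ring
    apply hzero _ hzs
    have : c w * z - z₀ = c w * (z - w) := by
      rw [mul_sub]
      simp only [hcdef]
      rw [div_mul_cancel₀ _ (hwne w)]
    rw [dist_eq_norm, this, norm_mul, hcnorm w, one_mul, ← dist_eq_norm]
    exact mem_ball.mp hwz
  -- maximum modulus: f = 0 on the ball
  have hfball : Set.EqOn f 0 (ball (0:ℂ) 1) := by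
    apply Complex.eqOn_of_eqOn_frontier isBounded_ball
      ⟨hfd, by rw [closure_ball (0:ℂ) one_ne_zero]; exact hfc⟩ diffContOnCl_const
    rw [frontier_ball (0:ℂ) one_ne_zero]
    intro z hz
    exact hfsphere z hz
  -- a sequence tending to 0
  set u : ℕ → ℂ := fun m => ((m : ℂ) + 2)⁻¹ with hudef
  have hu2 : ∀ m : ℕ, ((m:ℂ) + 2) ≠ 0 := by
    intro m
    have : (0:ℝ) < (m:ℝ) + 2 := by positivity
    intro h0
    have := congrArg Complex.re h0
    simp at this
    linarith
  have hune : ∀ m, u m ≠ 0 := fun m => inv_ne_zero (hu2 m)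
  have hunorm : ∀ m : ℕ, ‖u m‖ = ((m:ℝ) + 2)⁻¹ := by
    intro m
    rw [hudef]
    rw [norm_inv]
    congr 1
    rw [show ((m:ℂ) + 2) = ((m + 2 : ℕ) : ℂ) by push_cast; ring, Complex.norm_natCast]
    push_cast; ring
  have humem : ∀ m, u m ∈ ball (0:ℂ) 1 := by
    intro m
    rw [mem_ball_zero_iff, hunorm]
    rw [inv_lt_one_iff₀]
    right
    have : (0:ℝ) ≤ (m:ℝ) := Nat.cast_nonneg m
    linarith
  have hutend : Tendsto u atTop (𝓝 0) := by
    rw [tendsto_zero_iff_norm_tendsto_zero]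
    simp only [hunorm]
    have : Tendsto (fun m : ℕ => (m:ℝ) + 2) atTop atTop :=
      tendsto_atTop_add_const_right _ 2 tendsto_natCast_atTop_atTop
    exact this.inv_tendsto_atTop
  -- pigeonhole: some factor vanishes along infinitely many u m
  have hcover : (Set.univ : Set ℕ) ⊆ ⋃ w ∈ T, {m : ℕ | a (c w * u m) = 0} := by
    intro m _
    have := hfball (humem m)
    simp only [hfdef, Pi.zero_apply] at this
    obtain ⟨w, hwT, hw0⟩ := Finset.prod_eq_zero_iff.mp this
    exact Set.mem_iUnion₂.2 ⟨w, hwT, hw0⟩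
  have : ∃ w ∈ T, {m : ℕ | a (c w * u m) = 0}.Infinite := by
    by_contra hfin
    push_neg at hfin
    have : (Set.univ : Set ℕ).Finite :=
      Set.Finite.subset (Set.Finite.biUnion T.finite_toSet hfin) hcover
    exact Set.infinite_univ this
  obtain ⟨w, -, hwinf⟩ := this
  -- identity theorem: a ≡ 0 on the ball
  have hfreq : ∃ᶠ z in nhdsWithin (0:ℂ) {(0:ℂ)}ᶜ, a z = 0 := by
    have htend : Tendsto (fun m => c w * u m) atTop (nhdsWithin (0:ℂ) {(0:ℂ)}ᶜ) := by
      apply tendsto_nhdsWithin_of_tendsto_nhds_of_eventually_within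
      · simpa using hutend.const_mul (c w)
      · filter_upwards with m
        exact mul_ne_zero (hcne w) (hune m)
    exact htend.frequently (Nat.frequently_atTop_iff_infinite.mpr hwinf)
  have hanal : AnalyticOnNhd ℂ a (ball (0:ℂ) 1) := hd.analyticOnNhd isOpen_ball
  have haball : Set.EqOn a 0 (ball (0:ℂ) 1) :=
    hanal.eqOn_zero_of_preconnected_of_frequently_eq_zero
      (convex_ball (0:ℂ) 1).isPreconnected
      (mem_ball_self one_pos) hfreq
  -- extend to the closed ball by continuity
  have haclosed : Set.EqOn a 0 (closedBall (0:ℂ) 1) := by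
    apply haball.of_subset_closure hc continuousOn_const ball_subset_closedBall
    rw [← closure_ball (0:ℂ) one_ne_zero]
  exact hnz fun z hz => haclosed hz
end
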